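/- Let (x₁, y₁, z₁) and (x₂, y₂, z₂) be two orthonormal frames in ℝ³, let u ∈ ℝ³ be a unit vector, and let σ ∈ {−1, +1}. Then (x₁·y₂)[ (1/2)(x₁·y₂) + σ (u·x₂)(u·y₂) ] + (x₂·y₁)[ (1/2)(x₂·y₁) + σ (u·x₁)(u·y₁) ] + (x₁·z₂)[ (1/2)(x₁·z₂) + σ (u·x₂)(u·z₂) ] + (x₂·z₁)[ (1/2)(x₂·z₁) + σ (u·x₁)(u·z₁) ] ≥ 0. -/

import Mathlib

open RealInnerProductSpace

/-- An orthonormal frame in ℝ³: an ordered triple of pairwise orthogonal unit vectors. -/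
def IsONFrame (x y z : EuclideanSpace ℝ (Fin 3)) : Prop :=
  ‖x‖ = 1 ∧ ‖y‖ = 1 ∧ ‖z‖ = 1 ∧ ⟪x, y⟫ = 0 ∧ ⟪x, z⟫ = 0 ∧ ⟪y, z⟫ = 0

/-- Parseval identity for an orthonormal frame in ℝ³. -/
lemma frame_parseval (x y z : EuclideanSpace ℝ (Fin 3)) (h : IsONFrame x y z)
    (v w : EuclideanSpace ℝ (Fin 3)) :
    ⟪v, x⟫ * ⟪x, w⟫ + ⟪v, y⟫ * ⟪y, w⟫ + ⟪v, z⟫ * ⟪z, w⟫ = ⟪v, w⟫ := by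
  obtain ⟨hx, hy, hz, hxy, hxz, hyz⟩ := h
  set f : Fin 3 → EuclideanSpace ℝ (Fin 3) := ![x, y, z] with hf
  have hon : Orthonormal ℝ f := by
    rw [orthonormal_iff_ite]
    intro i j
    have hxx : ⟪x, x⟫ = 1 := by
      rw [real_inner_self_eq_norm_sq, hx]; norm_num
    have hyy : ⟪y, y⟫ = 1 := by
      rw [real_inner_self_eq_norm_sq, hy]; norm_num
    have hzz : ⟪z, z⟫ = 1 := by
      rw [real_inner_self_eq_norm_sq, hz]; norm_num
    have hyx : ⟪y, x⟫ = 0 := by rw [real_inner_comm]; exact hxy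
    have hzx : ⟪z, x⟫ = 0 := by rw [real_inner_comm]; exact hxz
    have hzy : ⟪z, y⟫ = 0 := by rw [real_inner_comm]; exact hyz
    fin_cases i <;> fin_cases j <;>
      simp [hf, hxx, hyy, hzz, hxy, hxz, hyz, hyx, hzx, hzy, hx, hy, hz]
  have hsp : ⊤ ≤ Submodule.span ℝ (Set.range f) := by
    rw [hon.linearIndependent.span_eq_top_of_card_eq_finrank]
    simp
  let b : OrthonormalBasis (Fin 3) ℝ (EuclideanSpace ℝ (Fin 3)) :=
    OrthonormalBasis.mk hon hsp
  have hb : ∀ i, b i = f i := fun i => OrthonormalBasis.coe_mk hon hsp ▸ rfl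
  have := b.sum_inner_mul_inner v w
  rw [Fin.sum_univ_three, hb 0, hb 1, hb 2] at this
  simpa [hf] using this

theorem stmt7 (x₁ y₁ z₁ x₂ y₂ z₂ u : EuclideanSpace ℝ (Fin 3))
    (h1 : IsONFrame x₁ y₁ z₁) (h2 : IsONFrame x₂ y₂ z₂) (hu : ‖u‖ = 1)
    (σ : ℝ) (hσ : σ = -1 ∨ σ = 1) :
    ⟪x₁, y₂⟫ * ((1 / 2) * ⟪x₁, y₂⟫ + σ * ⟪u, x₂⟫ * ⟪u, y₂⟫) +
    ⟪x₂, y₁⟫ * ((1 / 2) * ⟪x₂, y₁⟫ + σ * ⟪u, x₁⟫ * ⟪u, y₁⟫) +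
    ⟪x₁, z₂⟫ * ((1 / 2) * ⟪x₁, z₂⟫ + σ * ⟪u, x₂⟫ * ⟪u, z₂⟫) +
    ⟪x₂, z₁⟫ * ((1 / 2) * ⟪x₂, z₁⟫ + σ * ⟪u, x₁⟫ * ⟪u, z₁⟫) ≥ 0 := by
  have comm : ∀ v w : EuclideanSpace ℝ (Fin 3), ⟪v, w⟫ = ⟪w, v⟫ := fun v w =>
    real_inner_comm w v
  set c := ⟪x₁, x₂⟫ with hc
  set a₁ := ⟪x₁, y₂⟫ with ha₁
  set a₂ := ⟪x₂, y₁⟫ with ha₂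
  set a₃ := ⟪x₁, z₂⟫ with ha₃
  set a₄ := ⟪x₂, z₁⟫ with ha₄
  set p := ⟪u, x₁⟫ with hop
  set q := ⟪u, y₁⟫ with hoq
  set r := ⟪u, z₁⟫ with hor
  set p' := ⟪u, x₂⟫ with hop'
  set q' := ⟪u, y₂⟫ with hoq'
  set r' := ⟪u, z₂⟫ with hor'
  have hs : σ ^ 2 = 1 := by rcases hσ with h | h <;> rw [h] <;> norm_num
  have hx1 : ⟪x₁, x₁⟫ = 1 := by rw [real_inner_self_eq_norm_sq, h1.1]; norm_num
  have hx2 : ⟪x₂, x₂⟫ = 1 := by rw [real_inner_self_eq_norm_sq, h2.1]; norm_num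
  have huu : ⟪u, u⟫ = 1 := by rw [real_inner_self_eq_norm_sq, hu]; norm_num
  -- row identity: c² + a₁² + a₃² = 1
  have hrow : c * c + a₁ * a₁ + a₃ * a₃ = 1 := by
    have t := frame_parseval x₂ y₂ z₂ h2 x₁ x₁
    rw [comm x₂ x₁, comm y₂ x₁, comm z₂ x₁, hx1,
      ← hc, ← ha₁, ← ha₃] at t
    linarith
  -- column identity: c² + a₂² + a₄² = 1
  have hcol : c * c + a₂ * a₂ + a₄ * a₄ = 1 := by
    have t := frame_parseval x₁ y₁ z₁ h1 x₂ x₂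
    rw [comm x₂ x₁, comm y₁ x₂, comm z₁ x₂, hx2,
      ← hc, ← ha₂, ← ha₄] at t
    linarith
  -- u norm in frame 1
  have hu1 : p * p + q * q + r * r = 1 := by
    have t := frame_parseval x₁ y₁ z₁ h1 u u
    rw [comm x₁ u, comm y₁ u, comm z₁ u, huu,
      ← hop, ← hoq, ← hor] at t
    linarith
  -- p = c p' + a₁ q' + a₃ r'
  have hp : p = c * p' + a₁ * q' + a₃ * r' := by
    have t := frame_parseval x₂ y₂ z₂ h2 u x₁
    rw [comm x₂ x₁, comm y₂ x₁, comm z₂ x₁,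
      ← hc, ← ha₁, ← ha₃, ← hop, ← hop', ← hoq', ← hor'] at t
    linarith
  -- p' = c p + a₂ q + a₄ r
  have hp' : p' = c * p + a₂ * q + a₄ * r := by
    have t := frame_parseval x₁ y₁ z₁ h1 u x₂
    rw [comm y₁ x₂, comm z₁ x₂,
      ← hc, ← ha₂, ← ha₄, ← hop, ← hoq, ← hor, ← hop'] at t
    linarith
  have hsc : σ * c ≤ 1 := by
    nlinarith [sq_nonneg (σ * c - 1), sq_nonneg a₁, sq_nonneg a₃, sq_nonneg (σ*a₁),
      sq_nonneg (σ*a₃), hs, hrow]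
  -- key algebraic identity
  have hE : a₁ * ((1 / 2) * a₁ + σ * p' * q') + a₂ * ((1 / 2) * a₂ + σ * p * q) +
      a₃ * ((1 / 2) * a₃ + σ * p' * r') + a₄ * ((1 / 2) * a₄ + σ * p * r) =
      (a₂ * r - a₄ * q) ^ 2 + (1 - σ * c) * (p + σ * p') ^ 2 := by
    have h1' : a₁ * q' + a₃ * r' = p - c * p' := by linarith
    have h2' : a₂ * q + a₄ * r = p' - c * p := by linarith
    linear_combination (1/2) * hrow + (1/2 - q*q - r*r) * hcol + (σ*p') * h1' +
      (σ*p + p' - c*p + a₂*q + a₄*r) * h2' - (1 - c*c) * hu1 +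
      (2*c*p*p' - (1 - σ*c)*p'*p') * hs
  rw [hE]
  have h2 : (0:ℝ) ≤ (1 - σ * c) * (p + σ * p') ^ 2 :=
    mul_nonneg (by linarith) (sq_nonneg _)
  positivity
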